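/- For every integer n ≥ 1: (Rule B) S_{P_{n+1} − k}(2√2) = S_{P_n}(2√2) + S_{k−1}(2√2) for all integers k with 1 ≤ k ≤ P_{n−1}; and (Rule C) S_{P_n + k}(2√2) = S_{P_n}(2√2) + S_k(2√2) for all integers k with 1 ≤ k < P_n. -/

import Mathlib

/-- The deterministic random walk `S_n(ξ) = ∑_{j=1}^n (-1)^⌊j·ξ⌋`. -/
noncomputable def S (ξ : ℝ) (n : ℕ) : ℤ :=
  ∑ j ∈ Finset.Icc 1 n, ((Int.negOnePow ⌊(j : ℝ) * ξ⌋ : ℤˣ) : ℤ)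

/-- The Pell numbers: `P 0 = 0`, `P 1 = 1`, `P (n+2) = 2·P (n+1) + P n`. -/
def pell : ℕ → ℕ
  | 0 => 0
  | 1 => 1
  | n + 2 => 2 * pell (n + 1) + pell n

namespace Stmt9

local notation "rr" => Real.sqrt 2
local notation "tt" => (Real.sqrt 2 - 1)

lemma hr2 : rr ^ 2 = 2 := Real.sq_sqrt (by norm_num)
lemma hr0 : 0 < rr := Real.sqrt_pos.2 (by norm_num)
lemma hr1 : 1 < rr := by nlinarith [hr2, hr0]
lemma hr32 : rr < 3/2 := by nlinarith [hr2, hr0]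
lemma ht0 : 0 < tt := by linarith [hr1]
lemma ht12 : tt < 1/2 := by linarith [hr32]
lemma hrt : (1 + rr) * tt = 1 := by nlinarith [hr2]
lemma h1r : (1:ℝ) ≤ 1 + rr := by linarith [hr0]
lemma htpow_pos (m : ℕ) : 0 < tt ^ m := pow_pos ht0 m
lemma htpow_le_one (m : ℕ) : tt ^ m ≤ 1 := pow_le_one₀ (le_of_lt ht0) (by linarith [ht12])
lemma htpow_le (m : ℕ) (hm : 1 ≤ m) : tt ^ m ≤ tt :=
  pow_le_of_le_one (le_of_lt ht0) (by linarith [ht12]) (by omega)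

def hc : ℕ → ℕ
  | 0 => 1
  | 1 => 1
  | n + 2 => 2 * hc (n + 1) + hc n

lemma two_ind (P : ℕ → Prop) (h0 : P 0) (h1 : P 1)
    (h : ∀ n, P n → P (n+1) → P (n+2)) : ∀ n, P n := by
  have key : ∀ n, P n ∧ P (n+1) := by
    intro n
    induction n with
    | zero => exact ⟨h0, h1⟩
    | succ m ih => exact ⟨ih.2, h m ih.1 ih.2⟩
  exact fun n => (key n).1

lemma pellR : ∀ n : ℕ, 2 * rr * (pell n : ℝ) = (1+rr)^n - (1-rr)^n := by
  apply two_ind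
  · simp [pell]
  · show 2 * rr * ((1:ℕ) : ℝ) = (1+rr)^1 - (1-rr)^1
    push_cast; ring
  · intro n ih1 ih2
    show 2 * rr * ((2 * pell (n+1) + pell n : ℕ) : ℝ) = _
    push_cast
    have e1 : (1+rr)^(n+2) = 2*(1+rr)^(n+1) + (1+rr)^n := by
      rw [pow_succ, pow_succ]; linear_combination (1+rr)^n * hr2
    have e2 : (1-rr)^(n+2) = 2*(1-rr)^(n+1) + (1-rr)^n := by
      rw [pow_succ, pow_succ]; linear_combination (1-rr)^n * hr2
    rw [e1, e2]; push_cast at ih1 ih2; linarith [ih1, ih2]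

lemma hcR : ∀ n : ℕ, 2 * (hc n : ℝ) = (1+rr)^n + (1-rr)^n := by
  apply two_ind
  · show 2 * ((1:ℕ):ℝ) = _ ; push_cast; ring
  · show 2 * ((1:ℕ):ℝ) = (1+rr)^1 + (1-rr)^1; push_cast; ring
  · intro n ih1 ih2
    show 2 * ((2 * hc (n+1) + hc n : ℕ) : ℝ) = _
    push_cast
    have e1 : (1+rr)^(n+2) = 2*(1+rr)^(n+1) + (1+rr)^n := by
      rw [pow_succ, pow_succ]; linear_combination (1+rr)^n * hr2
    have e2 : (1-rr)^(n+2) = 2*(1-rr)^(n+1) + (1-rr)^n := by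
      rw [pow_succ, pow_succ]; linear_combination (1-rr)^n * hr2
    rw [e1, e2]; push_cast at ih1 ih2; linarith [ih1, ih2]

lemma one_sub_r : (1 - rr) = -tt := by ring

lemma pellT (n : ℕ) : 2 * rr * (pell n : ℝ) * tt^n = 1 - (-1)^n * (tt^n)^2 := by
  have h := pellR n
  have h1 : (1+rr)^n * tt^n = 1 := by
    rw [← mul_pow, hrt, one_pow]
  have h2 : (1-rr)^n = (-1)^n * tt^n := by
    rw [one_sub_r, neg_pow]
  calc 2 * rr * (pell n : ℝ) * tt^n = ((1+rr)^n - (1-rr)^n) * tt^n := by rw [h]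
    _ = (1+rr)^n * tt^n - (-1)^n * tt^n * tt^n := by rw [h2]; ring
    _ = 1 - (-1)^n * (tt^n)^2 := by rw [h1]; ring

lemma pellB (n : ℕ) : (pell n : ℝ) * (2*rr) = 2*(hc n : ℝ) - 2*(1-rr)^n := by
  have := pellR n; have := hcR n; nlinarith [pellR n, hcR n]



lemma pell_le_succ (n : ℕ) : pell n ≤ pell (n+1) := by
  match n with
  | 0 => simp [pell]
  | m + 1 => show pell (m+1) ≤ 2 * pell (m+1) + pell m ; omega

lemma pell_mono : Monotone pell := monotone_nat_of_le_succ pell_le_succ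

lemma pell_pos {n : ℕ} (hn : 1 ≤ n) : 1 ≤ pell n := pell_mono hn

lemma pell_two_mul {n : ℕ} (hn : 1 ≤ n) : 2 * pell n ≤ pell (n+1) := by
  match n, hn with
  | m + 1, _ => show 2 * pell (m+1) ≤ 2 * pell (m+1) + pell m ; omega

lemma pell_lt_imp {a b : ℕ} (h : pell a < pell b) : a < b := pell_mono.reflect_lt h

def a1 : 1 < 3 := by norm_num

lemma ynp : ∀ k : ℕ, 2 * Pell.yn a1 k = pell (2*k) ∧
    pell (2*k+1) = Pell.xn a1 k + 2 * Pell.yn a1 k := by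
  intro k
  induction k with
  | zero => simp [pell]
  | succ m ih =>
    obtain ⟨h1, h2⟩ := ih
    have hx : Pell.xn a1 (m+1) = Pell.xn a1 m * 3 + 8 * Pell.yn a1 m := Pell.xn_succ a1 m
    have hy := Pell.yn_succ a1 m
    have e2 : 2*(m+1) = (2*m) + 2 := by ring
    have e2' : 2*(m+1)+1 = (2*m+1) + 2 := by ring
    constructor
    · rw [e2]
      show 2 * Pell.yn a1 (m+1) = 2 * pell (2*m+1) + pell (2*m)
      rw [hy, h2, ← h1]; ring
    · rw [e2']
      have e3 : pell ((2*m+1)+2) = 2 * pell (2*m+1+1) + pell (2*m+1) := rfl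
      have e4 : pell (2*m+1+1) = 2 * pell (2*m+1) + pell (2*m) := by
        have : 2*m+1+1 = (2*m)+2 := by ring
        rw [this]; rfl
      rw [e3, e4, hx, hy, h2, ← h1]; ring

lemma xnR : ∀ k : ℕ, (Pell.xn a1 k : ℝ) + 2*rr*(Pell.yn a1 k : ℝ) = (1+rr)^(2*k) := by
  intro k
  induction k with
  | zero => simp
  | succ m ih =>
    have hx : Pell.xn a1 (m+1) = Pell.xn a1 m * 3 + 8 * Pell.yn a1 m := Pell.xn_succ a1 m
    have hy := Pell.yn_succ a1 m
    have e : (1+rr)^(2*(m+1)) = (1+rr)^(2*m) * (3 + 2*rr) := by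
      have h3 : (3 + 2*rr) = (1+rr)^2 := by linear_combination -hr2
      rw [h3, ← pow_add]; ring_nf
    rw [e, ← ih, hx, hy]
    push_cast
    nlinarith [hr2]

lemma pell_solution (x j : ℕ) (hj : 1 ≤ j) (hx : x*x = 8*(j*j)+1) :
    ∃ k, 1 ≤ k ∧ 2*j = pell (2*k) ∧ (x:ℝ) + 2*rr*(j:ℝ) = (1+rr)^(2*k) := by
  have hp : x * x - 8 * j * j = 1 := by rw [Nat.mul_assoc]; omega
  obtain ⟨k, hxk, hyk⟩ := Pell.eq_pell a1 hp
  refine ⟨k, ?_, ?_, ?_⟩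
  · rcases Nat.eq_zero_or_pos k with rfl | h
    · rw [Pell.yn_zero] at hyk; omega
    · exact h
  · rw [hyk]; exact (ynp k).1
  · rw [hxk, hyk]; exact xnR k




lemma irr (j : ℕ) (hj : 1 ≤ j) : Irrational ((j:ℝ)*(2*rr)) := by
  have h : ((j:ℝ)*(2*rr)) = ((2*j : ℕ) : ℝ) * rr := by push_cast; ring
  rw [h]
  exact irrational_sqrt_two.natCast_mul (by omega)

lemma sq8 (j : ℕ) : ((j:ℝ)*(2*rr))^2 = 8*(j:ℝ)^2 := by
  have : ((j:ℝ)*(2*rr))^2 = (j:ℝ)^2 * 4 * rr^2 := by ring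
  rw [this, hr2]; ring

/-- If `F < x√8 j` (floor), then `8j² - F² ≥ 4`. -/
lemma gap_low (j : ℕ) (F : ℤ) (h : F^2 < 8*(j:ℤ)^2) : 4 ≤ 8*(j:ℤ)^2 - F^2 := by
  rcases Int.even_or_odd F with ⟨u, hu⟩ | ⟨u, hu⟩
  · have e : 8*(j:ℤ)^2 - F^2 = 4*(2*(j:ℤ)^2 - u^2) := by rw [hu]; ring
    have h1 : 1 ≤ 8*(j:ℤ)^2 - F^2 := by omega
    rw [e] at h1 ⊢
    have : 1 ≤ 2*(j:ℤ)^2 - u^2 := by omega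
    omega
  · obtain ⟨v, hv⟩ : Even (u*(u+1)) := Int.even_mul_succ_self u
    have e : 8*(j:ℤ)^2 - F^2 = 8*((j:ℤ)^2 - v) - 1 := by rw [hu]; linear_combination (-4:ℤ)*hv
    have h1 : 1 ≤ 8*(j:ℤ)^2 - F^2 := by omega
    omega

lemma gap_high (j : ℕ) (G : ℤ) (h : 8*(j:ℤ)^2 < G^2) (hne : G^2 - 8*(j:ℤ)^2 ≠ 1) :
    4 ≤ G^2 - 8*(j:ℤ)^2 := by
  rcases Int.even_or_odd G with ⟨u, hu⟩ | ⟨u, hu⟩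
  · have e : G^2 - 8*(j:ℤ)^2 = 4*(u^2 - 2*(j:ℤ)^2) := by rw [hu]; ring
    have h1 : 1 ≤ G^2 - 8*(j:ℤ)^2 := by omega
    rw [e] at h1 ⊢
    have : 1 ≤ u^2 - 2*(j:ℤ)^2 := by omega
    omega
  · obtain ⟨v, hv⟩ : Even (u*(u+1)) := Int.even_mul_succ_self u
    have e : G^2 - 8*(j:ℤ)^2 = 8*(v - (j:ℤ)^2) + 1 := by rw [hu]; linear_combination (4:ℤ)*hv
    have h1 : 1 ≤ G^2 - 8*(j:ℤ)^2 := by omega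
    omega

lemma floor_sub' (m j : ℕ) (hj : 1 ≤ j) (H : 2*rr*(j:ℝ)*tt^m < 1) :
    ⌊(j:ℝ)*(2*rr) - 2*tt^m⌋ = ⌊(j:ℝ)*(2*rr)⌋ := by
  set x : ℝ := (j:ℝ)*(2*rr) with hxdef
  set F : ℤ := ⌊x⌋ with hF
  have hxpos : 0 < x := by
    have : (1:ℝ) ≤ (j:ℝ) := by exact_mod_cast hj
    nlinarith [hr0]
  have hFle : (F:ℝ) ≤ x := Int.floor_le x
  have hFne : x ≠ (F:ℝ) := (irr j hj).ne_int F
  have hFlt : (F:ℝ) < x := lt_of_le_of_ne hFle (Ne.symm hFne)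
  have hF0 : 0 ≤ F := Int.le_floor.2 (by exact_mod_cast hxpos.le)
  have hF0R : (0:ℝ) ≤ (F:ℝ) := by exact_mod_cast hF0
  have hFsq : (F:ℤ)^2 < 8*(j:ℤ)^2 := by
    have h1 : (F:ℝ)^2 < x^2 := by nlinarith [mul_pos (sub_pos.2 hFlt) (by linarith : (0:ℝ) < x + F)]
    rw [sq8] at h1
    exact_mod_cast h1
  have hgap := gap_low j F hFsq
  have hgapR : (4:ℝ) ≤ (x - F)*(x + F) := by
    have : (x-F)*(x+F) = x^2 - (F:ℝ)^2 := by ring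
    rw [this, sq8]
    have : ((8*(j:ℤ)^2 - F^2 : ℤ) : ℝ) ≥ 4 := by exact_mod_cast hgap
    push_cast at this ⊢
    linarith
  have hsum : x + F < 2*x := by linarith
  -- s := 2*tt^m ; show s < x - F
  have hs : 2*tt^m * (x + F) < 4 := by
    have h1 : 0 < x + F := by positivity
    have h2 : 2*tt^m * (x+F) < 2*tt^m * (2*x) := by
      have := htpow_pos m; nlinarith
    have h3 : 2*tt^m * (2*x) = 4*(2*rr*(j:ℝ)*tt^m) := by rw [hxdef]; ring
    nlinarith [htpow_pos m]
  have hkey : 2*tt^m < x - F := by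
    have h1 : 0 < x + F := by positivity
    nlinarith
  have hup := Int.lt_floor_add_one x
  rw [Int.floor_eq_iff]
  constructor
  · linarith
  · push_cast
    have := htpow_pos m
    rw [← hF] at hup
    linarith

lemma floor_add' (m j : ℕ) (hj : 1 ≤ j) (H1 : (4*rr*(j:ℝ)+1)*tt^m < 2)
    (H2 : ∀ x : ℕ, x*x = 8*(j*j)+1 → (x:ℝ) + 2*rr*(j:ℝ) < (1+rr)^m/2) :
    ⌊(j:ℝ)*(2*rr) + 2*tt^m⌋ = ⌊(j:ℝ)*(2*rr)⌋ := by
  set x : ℝ := (j:ℝ)*(2*rr) with hxdef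
  set F : ℤ := ⌊x⌋ with hF
  set G : ℤ := F + 1 with hG
  have hxpos : 0 < x := by
    have : (1:ℝ) ≤ (j:ℝ) := by exact_mod_cast hj
    nlinarith [hr0]
  have hFle : (F:ℝ) ≤ x := Int.floor_le x
  have hGFR : (G:ℝ) = (F:ℝ) + 1 := by rw [hG]; push_cast; ring
  have hup : x < (G:ℝ) := by
    rw [hGFR]
    exact_mod_cast Int.lt_floor_add_one x
  have hFne : x ≠ (F:ℝ) := (irr j hj).ne_int F
  have hFlt : (F:ℝ) < x := lt_of_le_of_ne hFle (Ne.symm hFne)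
  have hG0 : 0 < G := by
    have : (0:ℤ) ≤ F := Int.le_floor.2 (by exact_mod_cast hxpos.le)
    omega
  have hG0R : (0:ℝ) < (G:ℝ) := by exact_mod_cast hG0
  have hGsq : 8*(j:ℤ)^2 < G^2 := by
    have h1 : x^2 < (G:ℝ)^2 := by nlinarith
    rw [sq8] at h1
    exact_mod_cast h1
  have hprod : ((G:ℝ) - x)*((G:ℝ) + x) = ((G^2 - 8*(j:ℤ)^2 : ℤ) : ℝ) := by
    push_cast
    rw [show ((G:ℝ) - x)*((G:ℝ)+x) = (G:ℝ)^2 - x^2 by ring, sq8]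
  have hsumpos : (0:ℝ) < (G:ℝ) + x := by linarith
  have htm := htpow_pos m
  -- goal reduces to 2*tt^m < G - x
  have hkey : 2*tt^m < (G:ℝ) - x := by
    by_cases hone : G^2 - 8*(j:ℤ)^2 = 1
    · -- Pell solution case
      have hGnat : ((G.toNat : ℕ) : ℤ) = G := Int.toNat_of_nonneg hG0.le
      have hxx : G.toNat * G.toNat = 8*(j*j)+1 := by
        have : (G:ℤ)*(G:ℤ) = 8*((j:ℤ)*(j:ℤ))+1 := by nlinarith [hone]
        have h2 : ((G.toNat * G.toNat : ℕ) : ℤ) = ((8*(j*j)+1 : ℕ) : ℤ) := by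
          push_cast
          rw [hGnat] at *
          push_cast at this ⊢
          linarith [this]
        exact_mod_cast h2
      have h3 := H2 G.toNat hxx
      have hc2 : ((G.toNat : ℕ):ℝ) = ((G:ℤ):ℝ) := by exact_mod_cast hGnat
      rw [hc2] at h3
      have h4 : ((G:ℝ) - x) * ((G:ℝ) + x) = 1 := by
        rw [hprod, hone]; norm_num
      -- s*(G+x) < 2*t^m * (1+r)^m / 2 = t^m (1+r)^m = 1
      have h5 : tt^m * (1+rr)^m = 1 := by
        rw [← mul_pow]
        rw [show tt * (1+rr) = (1+rr)*tt by ring, hrt, one_pow]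
      have h6 : 2*tt^m * ((G:ℝ) + x) < 2*tt^m * ((1+rr)^m/2) := by
        apply mul_lt_mul_of_pos_left _ (by positivity)
        calc (G:ℝ) + x = (G:ℝ) + 2*rr*(j:ℝ) := by rw [hxdef]; ring
          _ < (1+rr)^m/2 := h3
      have h7 : 2*tt^m * ((1+rr)^m/2) = 1 := by
        rw [show 2*tt^m * ((1+rr)^m/2) = tt^m * (1+rr)^m by ring, h5]
      nlinarith [h6, h7, h4, hsumpos]
    · have hgap := gap_high j G hGsq hone
      have hgapR : (4:ℝ) ≤ ((G:ℝ) - x)*((G:ℝ) + x) := by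
        rw [hprod]; exact_mod_cast hgap
      have hsum : (G:ℝ) + x < 4*rr*(j:ℝ) + 1 := by
        have hx2 : x = 2*rr*(j:ℝ) := by rw [hxdef]; ring
        rw [hGFR]
        linarith [hFlt, hx2.symm.le, hx2.le]
        
      have hs : 2*tt^m * ((G:ℝ) + x) < 4 := by
        have h2 : 2*tt^m * ((G:ℝ)+x) < 2*tt^m * (4*rr*(j:ℝ)+1) := by
          apply mul_lt_mul_of_pos_left hsum (by positivity)
        have h3 : 2*tt^m * (4*rr*(j:ℝ)+1) = 2*((4*rr*(j:ℝ)+1)*tt^m) := by ring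
        nlinarith [H1]
      nlinarith [hgapR, hsumpos]
  rw [Int.floor_eq_iff]
  constructor
  · linarith
  · push_cast
    linarith [hkey, hGFR]


lemma hsubR (n : ℕ) : (hc n : ℝ) - rr * (pell n : ℝ) = (1-rr)^n := by
  have h1 := pellR n
  have h2 := hcR n
  linarith

lemma pell_bound_T (n : ℕ) : 2*rr*(pell n : ℝ)*tt^n ≤ 2 := by
  have h := pellT n
  have hT := htpow_le_one n
  have hT0 := htpow_pos n
  rcases Nat.even_or_odd n with he | ho
  · rw [he.neg_one_pow] at h; nlinarith
  · rw [ho.neg_one_pow] at h; nlinarith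

lemma floor_shift (n j : ℕ) (hn : 1 ≤ n) (hj1 : 1 ≤ j) (hj : j < pell n) :
    ⌊((pell n + j : ℕ):ℝ)*(2*rr)⌋ = 2*(hc n : ℤ) + ⌊(j:ℝ)*(2*rr)⌋ := by
  have hsplit : ((pell n + j : ℕ):ℝ)*(2*rr)
      = ((j:ℝ)*(2*rr) - 2*(1-rr)^n) + ((2*(hc n) : ℤ):ℝ) := by
    push_cast
    have := pellB n
    nlinarith [pellB n]
  rw [hsplit]
  rw [Int.floor_add_intCast]
  have hjr : (j:ℝ) ≤ (pell n : ℝ) - 1 := by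
    have : (j:ℝ) + 1 ≤ (pell n : ℝ) := by exact_mod_cast hj
    linarith
  have hT0 := htpow_pos n
  have hT1 := htpow_le_one n
  rcases Nat.even_or_odd n with he | ho
  · -- even : (1-rr)^n = tt^n, floor_sub'
    have he1 : (1-rr)^n = tt^n := by rw [one_sub_r, he.neg_pow]
    rw [he1]
    rw [floor_sub' n j hj1 ?_]
    · ring_nf
    · -- 2*rr*j*tt^n < 1
      have h := pellT n
      rw [he.neg_one_pow] at h
      have hmul : 2*rr*(j:ℝ)*tt^n ≤ 2*rr*((pell n : ℝ)-1)*tt^n := by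
        have : 0 ≤ 2*rr*tt^n := by positivity
        nlinarith [hr0]
      nlinarith [hr0, mul_pos (mul_pos (by linarith [hr0] : (0:ℝ) < 2*rr) hT0) hT0]
  · -- odd : (1-rr)^n = -tt^n, floor_add'
    have ho1 : (1-rr)^n = -tt^n := by rw [one_sub_r, ho.neg_pow]
    rw [ho1]
    have hgoal : (j:ℝ)*(2*rr) - 2*(-tt^n) = (j:ℝ)*(2*rr) + 2*tt^n := by ring
    rw [hgoal]
    rw [floor_add' n j hj1 ?_ ?_]
    · ring_nf
    · -- H1
      have h := pellT n
      rw [ho.neg_one_pow] at h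
      have hmul : 4*rr*(j:ℝ)*tt^n ≤ 4*rr*((pell n : ℝ)-1)*tt^n := by
        have : 0 ≤ 4*rr*tt^n := by positivity
        nlinarith [hr0]
      -- 4 rr (pelln - 1) T = 2(1+T²) - 4 rr T
      nlinarith [hr1, hT0, hT1, mul_pos ht0 hT0]
    · -- H2
      intro x hx
      obtain ⟨k, hk1, hk2, hk3⟩ := pell_solution x j hj1 hx
      rw [hk3]
      have hlt : pell (2*k) < pell (n+1) := by
        have h1 : 2*j ≤ 2*pell n - 2 := by omega
        have h2 := pell_two_mul hn
        omega
      have h2k : 2*k ≤ n - 1 := by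
        have := pell_lt_imp hlt
        rcases ho with ⟨w, hw⟩
        omega
      have hpow : (1+rr)^(2*k) ≤ (1+rr)^(n-1) := pow_le_pow_right₀ h1r h2k
      have hns : n = (n-1) + 1 := by omega
      have hpow2 : (1+rr)^n = (1+rr)^(n-1) * (1+rr) := by
        nth_rewrite 1 [hns]; rw [pow_succ]
      have hp0 : (0:ℝ) < (1+rr)^(n-1) := by positivity
      rw [hpow2]
      nlinarith [hr1]

lemma floor_refl (n i : ℕ) (hn : 2 ≤ n) (hi1 : 1 ≤ i) (hi : i ≤ pell n) :
    ⌊((pell (n+1) - i : ℕ):ℝ)*(2*rr)⌋ = 2*(hc (n+1) : ℤ) - 1 - ⌊(i:ℝ)*(2*rr)⌋ := by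
  have hilt : i < pell (n+1) := by
    have h2 := pell_two_mul (by omega : 1 ≤ n)
    have := pell_pos (by omega : 1 ≤ n)
    omega
  set y : ℝ := (i:ℝ)*(2*rr) + 2*(1-rr)^(n+1) with hy
  set w : ℝ := ((pell (n+1) - i : ℕ):ℝ)*(2*rr) with hw
  have hwy : w = 2*(hc (n+1) : ℝ) - y := by
    rw [hw, hy]
    rw [Nat.cast_sub hilt.le]
    have := pellB (n+1)
    nlinarith [pellB (n+1)]
  have hT0 := htpow_pos (n+1)
  -- ⌊y⌋ = ⌊i 2rr⌋
  have hfy : ⌊y⌋ = ⌊(i:ℝ)*(2*rr)⌋ := by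
    rcases Nat.even_or_odd n with he | ho
    · -- n even, n+1 odd : (1-rr)^(n+1) = -tt^(n+1)
      have ho1 : (1-rr)^(n+1) = -tt^(n+1) := by
        rw [one_sub_r]
        exact (he.add_one).neg_pow _
      rw [hy, ho1, show (i:ℝ)*(2*rr) + 2*(-tt^(n+1)) = (i:ℝ)*(2*rr) - 2*tt^(n+1) by ring]
      apply floor_sub' (n+1) i hi1
      -- 2 rr i tt^(n+1) < 1
      have hb := pell_bound_T n
      have hir : (i:ℝ) ≤ (pell n : ℝ) := by exact_mod_cast hi
      have h1 : 2*rr*(i:ℝ)*tt^(n+1) ≤ 2*rr*(pell n : ℝ)*tt^(n+1) := by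
        have : 0 ≤ 2*rr*tt^(n+1) := by positivity
        nlinarith [hr0]
      have h2 : 2*rr*(pell n:ℝ)*tt^(n+1) = (2*rr*(pell n:ℝ)*tt^n)*tt := by ring
      nlinarith [htpow_pos n, ht0, ht12, pell_bound_T n]
    · -- n odd, n+1 even
      have he1 : (1-rr)^(n+1) = tt^(n+1) := by
        rw [one_sub_r]
        exact (ho.add_one).neg_pow _
      rw [hy, he1]
      apply floor_add' (n+1) i hi1
      · -- H1 : (4 rr i + 1) tt^(n+1) < 2
        have h := pellT n
        rw [ho.neg_one_pow] at h
        have hir : (i:ℝ) ≤ (pell n : ℝ) := by exact_mod_cast hi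
        have h1 : 4*rr*(i:ℝ)*tt^(n+1) ≤ 4*rr*(pell n : ℝ)*tt^(n+1) := by
          have : 0 ≤ 4*rr*tt^(n+1) := by positivity
          nlinarith [hr0]
        have h2 : 4*rr*(pell n:ℝ)*tt^(n+1) = 2*(2*rr*(pell n:ℝ)*tt^n)*tt := by ring
        -- = 2(1+T²) tt  with T = tt^n ≤ tt ; plus tt^(n+1) ≤ tt^2
        have hTle : tt^n ≤ tt := htpow_le n (by omega)
        have hT2 : tt^(n+1) ≤ tt^2 := by
          apply pow_le_pow_of_le_one (le_of_lt ht0) (by linarith [ht12]) (by omega)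
        nlinarith [htpow_pos n, ht0, ht12]
      · -- H2
        intro x hx
        obtain ⟨k, hk1, hk2, hk3⟩ := pell_solution x i hi1 hx
        rw [hk3]
        have hlt : pell (2*k) < pell (n+1) := by
          have : pell (n+1) = 2 * pell n + pell (n-1) := by
            obtain ⟨m, rfl⟩ : ∃ m, n = m + 2 := ⟨n - 2, by omega⟩
            rfl
          have := pell_pos (by omega : 1 ≤ n - 1)
          omega
        have h2k : 2*k ≤ n - 1 := by
          have := pell_lt_imp hlt
          rcases ho with ⟨w, hw⟩
          omega
        have hpow : (1+rr)^(2*k) ≤ (1+rr)^(n-1) := pow_le_pow_right₀ h1r h2k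
        have hns : n + 1 = (n-1) + 2 := by omega
        have hpow2 : (1+rr)^(n+1) = (1+rr)^(n-1) * (1+rr)^2 := by
          rw [hns, pow_add]
        have hp0 : (0:ℝ) < (1+rr)^(n-1) := by positivity
        rw [hpow2]
        nlinarith [hr1, hr2]
  -- now conclude
  have hyF : (⌊(i:ℝ)*(2*rr)⌋ : ℝ) ≤ y := hfy ▸ Int.floor_le y
  have hyF2 : y < (⌊(i:ℝ)*(2*rr)⌋ : ℝ) + 1 := by
    have := Int.lt_floor_add_one y
    rw [hfy] at this
    exact_mod_cast this
  have hirrw : Irrational w := by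
    rw [hw]
    apply irr
    omega
  have hyne : y ≠ (⌊(i:ℝ)*(2*rr)⌋ : ℝ) := by
    intro hcon
    apply hirrw.ne_int (2*(hc (n+1)) - ⌊(i:ℝ)*(2*rr)⌋)
    rw [hwy, hcon]
    push_cast
    ring
  have hylt : (⌊(i:ℝ)*(2*rr)⌋ : ℝ) < y := lt_of_le_of_ne hyF (Ne.symm hyne)
  rw [Int.floor_eq_iff]
  constructor
  · rw [hwy]; push_cast; linarith
  · rw [hwy]; push_cast; linarith

lemma floor_pell (n : ℕ) (hn : 1 ≤ n) :
    ⌊((pell n : ℕ):ℝ)*(2*rr)⌋ = if n % 2 = 0 then 2*(hc n:ℤ) - 1 else 2*(hc n:ℤ) := by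
  have hval : ((pell n : ℕ):ℝ)*(2*rr) = 2*(hc n : ℝ) - 2*(1-rr)^n := pellB n
  rcases Nat.even_or_odd n with he | ho
  · have hn2 : 2 ≤ n := by
      rcases he with ⟨w, hw⟩; omega
    have he1 : (1-rr)^n = tt^n := by rw [one_sub_r, he.neg_pow]
    have hT2 : tt^n ≤ tt^2 := pow_le_pow_of_le_one (le_of_lt ht0) (by linarith [ht12]) hn2
    have ht2v : tt^2 = 3 - 2*rr := by nlinarith [hr2]
    have h2T : 2*tt^n < 1 := by nlinarith [hr1, hr32]
    have hT0 := htpow_pos n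
    rw [if_pos (Nat.even_iff.mp he)]
    rw [Int.floor_eq_iff]
    constructor
    · rw [hval, he1]; push_cast; linarith
    · rw [hval, he1]; push_cast; linarith
  · have ho1 : (1-rr)^n = -tt^n := by rw [one_sub_r, ho.neg_pow]
    have hTle : tt^n ≤ tt := htpow_le n (by omega)
    have h2T : 2*tt^n < 1 := by nlinarith [ht12, htpow_pos n]
    have hT0 := htpow_pos n
    rw [if_neg (by simp [Nat.odd_iff.mp ho])]
    rw [Int.floor_eq_iff]
    constructor
    · rw [hval, ho1]; push_cast; linarith
    · rw [hval, ho1]; push_cast; linarith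


noncomputable def e (j : ℕ) : ℤ := ((Int.negOnePow ⌊(j : ℝ) * (2*rr)⌋ : ℤˣ) : ℤ)

lemma S_zero : S (2*rr) 0 = 0 := by simp [S]

lemma S_succ (m : ℕ) : S (2*rr) (m+1) = S (2*rr) m + e (m+1) := by
  unfold S e
  rw [Finset.sum_Icc_succ_top (by omega : 1 ≤ m+1)]

lemma e_shift (n j : ℕ) (hn : 1 ≤ n) (hj1 : 1 ≤ j) (hj : j < pell n) :
    e (pell n + j) = e j := by
  unfold e
  rw [floor_shift n j hn hj1 hj, Int.negOnePow_add, Int.negOnePow_two_mul]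
  simp

lemma e_refl (n i : ℕ) (hn : 2 ≤ n) (hi1 : 1 ≤ i) (hi : i ≤ pell n) :
    e (pell (n+1) - i) = - e i := by
  unfold e
  rw [floor_refl n i hn hi1 hi]
  rw [show 2*(hc (n+1):ℤ) - 1 - ⌊(i:ℝ)*(2*rr)⌋
      = 2*(hc (n+1):ℤ) + (-(⌊(i:ℝ)*(2*rr)⌋+1)) by ring]
  rw [Int.negOnePow_add, Int.negOnePow_two_mul, Int.negOnePow_neg, Int.negOnePow_succ]
  simp

lemma e_pell (n : ℕ) (hn : 1 ≤ n) : e (pell n) = if n % 2 = 0 then -1 else 1 := by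
  unfold e
  rw [floor_pell n hn]
  split_ifs with h
  · rw [show 2*(hc n:ℤ) - 1 = 2*(hc n:ℤ) + (-1) by ring,
      Int.negOnePow_add, Int.negOnePow_two_mul, Int.negOnePow_neg]
    simp
  · rw [Int.negOnePow_two_mul]
    simp

lemma ruleC (n : ℕ) (hn : 1 ≤ n) :
    ∀ k, k < pell n → S (2*rr) (pell n + k) = S (2*rr) (pell n) + S (2*rr) k := by
  intro k
  induction k with
  | zero => intro _; simp [S_zero]
  | succ m ih =>
    intro hk
    have h1 : pell n + (m+1) = (pell n + m) + 1 := by omega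
    rw [h1, S_succ, ih (by omega), S_succ]
    have he := e_shift n (m+1) hn (by omega) hk
    rw [show pell n + m + 1 = pell n + (m+1) by omega, he]
    ring

lemma ruleU (n : ℕ) (hn : 2 ≤ n) :
    ∀ i, i ≤ pell n →
      S (2*rr) (pell (n+1) - 1 - i) = S (2*rr) (pell (n+1) - 1) + S (2*rr) i := by
  have h2 := pell_two_mul (show 1 ≤ n by omega)
  have hp := pell_pos (show 1 ≤ n by omega)
  intro i
  induction i with
  | zero => intro _; simp [S_zero]
  | succ m ih =>
    intro hm
    have key : pell (n+1) - 1 - m = (pell (n+1) - 1 - (m+1)) + 1 := by omega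
    have hstep : S (2*rr) (pell (n+1) - 1 - m)
        = S (2*rr) (pell (n+1) - 1 - (m+1)) + e (pell (n+1) - 1 - m) := by
      rw [key, S_succ, ← key]
    have he : e (pell (n+1) - 1 - m) = - e (m+1) := by
      rw [show pell (n+1) - 1 - m = pell (n+1) - (m+1) by omega]
      exact e_refl n (m+1) hn (by omega) hm
    have hihm := ih (by omega)
    rw [hihm, he] at hstep
    rw [S_succ]
    have hre : S (2*rr) (pell (n+1) - 1 - (m+1)) =
        S (2*rr) (pell (n+1) - 1) + S (2*rr) m + e (m+1) := by
      omega
    rw [hre]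
    ring

lemma e_one : e 1 = 1 := by
  unfold e
  have hf : ⌊((1:ℕ):ℝ)*(2*rr)⌋ = 2 := by
    rw [Int.floor_eq_iff]
    push_cast
    constructor
    · nlinarith [hr1]
    · nlinarith [hr32]
  rw [hf]
  decide

lemma e_two : e 2 = -1 := by
  unfold e
  have h54 : (5:ℝ)/4 < rr := by nlinarith [hr2, hr0]
  have hf : ⌊((2:ℕ):ℝ)*(2*rr)⌋ = 5 := by
    rw [Int.floor_eq_iff]
    push_cast
    constructor
    · nlinarith [h54]
    · nlinarith [hr32]
  rw [hf]
  decide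

lemma S_one : S (2*rr) 1 = 1 := by
  rw [show S (2*rr) 1 = S (2*rr) (0 + 1) by rfl, S_succ, S_zero, e_one]
  ring

lemma S_two : S (2*rr) 2 = 0 := by
  rw [show (2:ℕ) = 1 + 1 by rfl, S_succ, S_one, e_two]
  ring

lemma key_sub (n : ℕ) (hn : 2 ≤ n) :
    S (2*rr) (pell (n+1) - 1) = S (2*rr) (pell (n-1) - 1) := by
  obtain ⟨m, rfl⟩ : ∃ m, n = m+2 := ⟨n-2, by omega⟩
  have hnot : m+2-1 = m+1 := rfl
  rw [hnot]
  have hple : pell (m+1) ≤ pell (m+2) := pell_mono (by omega)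
  have hp1 : 1 ≤ pell (m+1) := pell_pos (by omega)
  have hpn : 1 ≤ pell (m+2) := pell_pos (by omega)
  have h1 := ruleU (m+2) (by omega) (pell (m+2)) (le_refl _)
  have hrr : pell (m+2+1) = 2 * pell (m+2) + pell (m+1) := rfl
  have heq : pell (m+2+1) - 1 - pell (m+2) = pell (m+2) + (pell (m+1) - 1) := by omega
  have h2 := ruleC (m+2) (by omega) (pell (m+1) - 1) (by omega)
  rw [heq, h2] at h1
  omega

lemma SA : ∀ n, S (2*rr) (pell n) = if n % 2 = 1 then 1 else 0 := by
  apply two_ind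
  · simp [pell, S_zero]
  · simpa [pell] using S_one
  · intro n ih1 _
    match n with
    | 0 => simpa [pell] using S_two
    | m + 1 =>
      show S (2*rr) (pell (m+3)) = if (m+3) % 2 = 1 then 1 else 0
      have hp := pell_pos (show 1 ≤ m+3 by omega)
      have hstep : S (2*rr) (pell (m+3)) =
          S (2*rr) (pell (m+3) - 1) + e (pell (m+3)) := by
        rw [show pell (m+3) = (pell (m+3) - 1) + 1 by omega, S_succ,
          show pell (m+3) - 1 + 1 = pell (m+3) by omega]
      have hks := key_sub (m+2) (by omega)
      have hc1 : m+2+1 = m+3 := rfl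
      have hc2 : m+2-1 = m+1 := rfl
      rw [hc1, hc2] at hks
      have hp1 := pell_pos (show 1 ≤ m+1 by omega)
      have hstep2 : S (2*rr) (pell (m+1)) =
          S (2*rr) (pell (m+1) - 1) + e (pell (m+1)) := by
        rw [show pell (m+1) = (pell (m+1) - 1) + 1 by omega, S_succ,
          show pell (m+1) - 1 + 1 = pell (m+1) by omega]
      have hee : e (pell (m+3)) = e (pell (m+1)) := by
        rw [e_pell (m+3) (by omega), e_pell (m+1) (by omega)]
        have : (m+3) % 2 = (m+1) % 2 := by omega
        rw [this]
      have hmm : (m+3) % 2 = (m+1) % 2 := by omega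
      rw [hmm, ← ih1]
      omega

lemma anchor (n : ℕ) (hn : 2 ≤ n) : S (2*rr) (pell (n+1) - 1) = S (2*rr) (pell n) := by
  have hks := key_sub n hn
  have hp1 := pell_pos (show 1 ≤ n-1 by omega)
  have hstep : S (2*rr) (pell (n-1)) =
      S (2*rr) (pell (n-1) - 1) + e (pell (n-1)) := by
    rw [show pell (n-1) = (pell (n-1) - 1) + 1 by omega, S_succ,
      show pell (n-1) - 1 + 1 = pell (n-1) by omega]
  have hA1 := SA (n-1)
  have hAn := SA n
  have hep := e_pell (n-1) (by omega)
  have hmod : (n-1) % 2 = 1 - n % 2 := by omega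
  rcases Nat.even_or_odd n with he | ho
  · have h0 : n % 2 = 0 := Nat.even_iff.mp he
    rw [h0] at hAn; rw [hmod, h0] at hA1 hep
    simp at hA1 hAn hep
    omega
  · have h1 : n % 2 = 1 := Nat.odd_iff.mp ho
    rw [h1] at hAn; rw [hmod, h1] at hA1 hep
    simp at hA1 hAn hep
    omega


end Stmt9

/-- Rules B and C for the walk `S_n(2√2)`. -/
theorem stmt_9 (n : ℕ) (hn : 1 ≤ n) :
    (∀ k : ℕ, 1 ≤ k → k ≤ pell (n - 1) →
      S (2 * Real.sqrt 2) (pell (n + 1) - k) =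
        S (2 * Real.sqrt 2) (pell n) + S (2 * Real.sqrt 2) (k - 1)) ∧
    (∀ k : ℕ, 1 ≤ k → k < pell n →
      S (2 * Real.sqrt 2) (pell n + k) =
        S (2 * Real.sqrt 2) (pell n) + S (2 * Real.sqrt 2) k) := by
  constructor
  · intro k hk1 hk2
    rcases Nat.lt_or_ge n 2 with h2 | h2
    · have hn1 : n = 1 := by omega
      subst hn1
      have h0 : pell (1-1) = 0 := rfl
      omega
    · have hple : pell (n-1) ≤ pell n := Stmt9.pell_mono (by omega)
      have hU := Stmt9.ruleU n h2 (k-1) (by omega)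
      rw [show pell (n+1) - 1 - (k-1) = pell (n+1) - k by
        have := Stmt9.pell_two_mul (show 1 ≤ n by omega)
        have := Stmt9.pell_pos (show 1 ≤ n by omega)
        omega] at hU
      rw [hU, Stmt9.anchor n h2]
  · intro k hk1 hk2
    exact Stmt9.ruleC n hn k hk2
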